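/- Let n ≥ 3, g the n-cycle (1 2 ... n) and h the reversal i ↦ n+1-i in S_n. If n ≡ 0 (mod 4), then the intersection of ⟨g,h⟩ with A_n equals the subgroup generated by g^2 and h, and this intersection has order n. -/

import Mathlib

open Equiv Equiv.Perm Subgroup

private theorem sign_revPerm_eq : ∀ n : ℕ,
    Perm.sign (Fin.revPerm : Perm (Fin n)) = (-1) ^ (n / 2)
  | 0 => by
    have : (Fin.revPerm : Perm (Fin 0)) = 1 := Subsingleton.elim _ _
    rw [this]; simp
  | 1 => by
    have : (Fin.revPerm : Perm (Fin 1)) = 1 := Subsingleton.elim _ _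
    rw [this]; simp
  | (n + 2) => by
    have ih := sign_revPerm_eq n
    set f : Fin n ↪ Fin (n + 2) :=
      ⟨fun i => i.succ.castSucc, fun i j hij => by
        simpa [Fin.ext_iff] using hij⟩ with hf
    have key : (Fin.revPerm : Perm (Fin (n + 2))) =
        (Fin.revPerm : Perm (Fin n)).viaFintypeEmbedding f *
          Equiv.swap 0 (Fin.last (n + 1)) := by
      ext a
      rw [Perm.mul_apply]
      by_cases h0 : a = 0
      · subst h0
        rw [swap_apply_left, Perm.viaFintypeEmbedding_apply_notMem_range]
        · simp
        · rintro ⟨i, hi⟩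
          have := congrArg Fin.val hi
          simp [hf] at this
          omega
      by_cases hl : a = Fin.last (n + 1)
      · subst hl
        rw [swap_apply_right, Perm.viaFintypeEmbedding_apply_notMem_range]
        · simp
        · rintro ⟨i, hi⟩
          have := congrArg Fin.val hi
          simp [hf] at this
      · rw [swap_apply_of_ne_of_ne h0 hl]
        have hv0 : a.val ≠ 0 := fun hc => h0 (Fin.ext hc)
        have hvl : a.val ≠ n + 1 := fun hc => hl (Fin.ext hc)
        have hva : a.val < n + 2 := a.isLt
        have hi : a.val - 1 < n := by omega
        have ha : a = f ⟨a.val - 1, hi⟩ := by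
          apply Fin.ext
          simp [hf]
          omega
        rw [ha, Perm.viaFintypeEmbedding_apply_image]
        simp [hf, Fin.val_rev]
        omega
    rw [key, map_mul, Perm.viaFintypeEmbedding_sign, ih, sign_swap]
    · rw [show (n + 2) / 2 = n / 2 + 1 from by omega, pow_succ]
    · intro hc
      have := congrArg Fin.val hc
      simp at this

private theorem mem_dihedral {G : Type*} [Group G] {a h : G} (hh : h * h = 1)
    (hc : ∀ k : ℤ, h * a ^ k = a ^ (-k) * h) (x : G) :
    x ∈ Subgroup.closure {a, h} ↔ (∃ k : ℤ, a ^ k = x) ∨ (∃ k : ℤ, a ^ k * h = x) := by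
  constructor
  · intro hx
    induction hx using Subgroup.closure_induction with
    | mem y hy =>
      rcases hy with rfl | rfl
      · exact Or.inl ⟨1, zpow_one _⟩
      · exact Or.inr ⟨0, by rw [zpow_zero, one_mul]⟩
    | one => exact Or.inl ⟨0, zpow_zero _⟩
    | mul y z _ _ hy hz =>
      rcases hy with ⟨j, rfl⟩ | ⟨j, rfl⟩ <;> rcases hz with ⟨k, rfl⟩ | ⟨k, rfl⟩
      · exact Or.inl ⟨j + k, zpow_add a j k⟩
      · exact Or.inr ⟨j + k, by rw [zpow_add, mul_assoc]⟩
      · refine Or.inr ⟨j - k, ?_⟩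
        rw [mul_assoc, hc k, ← mul_assoc, ← zpow_add, ← sub_eq_add_neg]
      · refine Or.inl ⟨j - k, ?_⟩
        rw [mul_assoc, ← mul_assoc h, hc k, mul_assoc, hh, mul_one, ← zpow_add,
          ← sub_eq_add_neg]
    | inv y _ hy =>
      have hinv : h⁻¹ = h := inv_eq_of_mul_eq_one_right hh
      rcases hy with ⟨k, rfl⟩ | ⟨k, rfl⟩
      · exact Or.inl ⟨-k, zpow_neg a k⟩
      · refine Or.inr ⟨k, ?_⟩
        rw [mul_inv_rev, hinv, ← zpow_neg, hc (-k), neg_neg]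
  · rintro (⟨k, rfl⟩ | ⟨k, rfl⟩)
    · exact zpow_mem (Subgroup.subset_closure (by simp)) k
    · exact mul_mem (zpow_mem (Subgroup.subset_closure (by simp)) k)
        (Subgroup.subset_closure (by simp))

private theorem neg_one_zpow_two_mul (k : ℤ) : ((-1 : ℤˣ)) ^ (2 * k) = 1 := by
  have h2 : ((-1 : ℤˣ)) ^ (2 : ℤ) = 1 := by
    rw [show (2 : ℤ) = ((2 : ℕ) : ℤ) from rfl, zpow_natCast]
    decide
  rw [zpow_mul, h2, one_zpow]

private theorem neg_one_zpow_odd {k : ℤ} (hk : Odd k) : ((-1 : ℤˣ)) ^ k = -1 := by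
  obtain ⟨j, rfl⟩ := hk
  rw [zpow_add, neg_one_zpow_two_mul, one_mul, zpow_one]

open Fin.NatCast in
private theorem finRotate_pow_apply {m : ℕ} (k : ℕ) (i : Fin (m + 1)) :
    ((finRotate (m + 1)) ^ k) i = i + (k : Fin (m + 1)) := by
  induction k with
  | zero => simp
  | succ k ih =>
    rw [pow_succ', Perm.mul_apply, ih, finRotate_succ_apply, Nat.cast_succ, add_assoc]

/-- For n ≡ 0 (mod 4), ⟨g,h⟩ ∩ A_n = ⟨g², h⟩ and this intersection has order n. -/
theorem dihedral_inf_alternating_zero (n : ℕ) (hn : 3 ≤ n) (h4 : n % 4 = 0) :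
    Subgroup.closure {finRotate n, (Fin.revPerm : Equiv.Perm (Fin n))}
          ⊓ alternatingGroup (Fin n)
        = Subgroup.closure {(finRotate n) ^ 2, (Fin.revPerm : Equiv.Perm (Fin n))} ∧
      Nat.card ↥(Subgroup.closure {finRotate n, (Fin.revPerm : Equiv.Perm (Fin n))}
          ⊓ alternatingGroup (Fin n)) = n := by
  obtain ⟨m, rfl⟩ : ∃ m, n = m + 4 := ⟨n - 4, by omega⟩
  have hm4 : m % 4 = 0 := by omega
  set g : Perm (Fin (m + 4)) := finRotate (m + 4) with hg
  set h : Perm (Fin (m + 4)) := Fin.revPerm with hhdef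
  -- basic relations
  have hh : h * h = 1 := by
    ext i
    simp [hhdef, Perm.mul_apply]
  have hinv : h⁻¹ = h := inv_eq_of_mul_eq_one_right hh
  have hR : g * h * g = h := by
    ext i
    simp [hg, hhdef, Perm.mul_apply, Fin.rev_add, sub_add_cancel]
  have hgh : h * g * h = g⁻¹ := by
    calc h * g * h = g⁻¹ * (g * h * g * h) := by group
      _ = g⁻¹ * (h * h) := by rw [hR]
      _ = g⁻¹ := by rw [hh, mul_one]
  have hconj : ∀ k : ℤ, h * g ^ k * h = g ^ (-k) := by
    intro k
    have h2 := map_zpow (MulAut.conj h) g k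
    simp only [MulAut.conj_apply, hinv] at h2
    rw [h2, hgh, inv_zpow, ← zpow_neg]
  have hc : ∀ k : ℤ, h * g ^ k = g ^ (-k) * h := by
    intro k
    calc h * g ^ k = h * g ^ k * (h * h) := by rw [hh, mul_one]
      _ = (h * g ^ k * h) * h := by rw [← mul_assoc]
      _ = g ^ (-k) * h := by rw [hconj k]
  have key : ∀ j : ℤ, (g ^ 2) ^ j = g ^ (2 * j) := by
    intro j
    rw [← zpow_natCast g 2, ← zpow_mul]
    norm_num
  have hc2 : ∀ k : ℤ, h * (g ^ 2) ^ k = (g ^ 2) ^ (-k) * h := by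
    intro k
    rw [key, key, mul_neg]
    exact hc (2 * k)
  -- h is not a power of g
  have hnotin : h ∉ Subgroup.zpowers g := by
    intro hmem
    rw [← mem_powers_iff_mem_zpowers] at hmem
    obtain ⟨k, hk⟩ := hmem
    have hk' : g ^ k = h := hk
    have e0 : (g ^ k) (0 : Fin (m + 4)) = h 0 := by rw [hk']
    have e1 : (g ^ k) (1 : Fin (m + 4)) = h 1 := by rw [hk']
    rw [hg, finRotate_pow_apply, zero_add] at e0
    rw [hg, finRotate_pow_apply] at e1
    rw [e0] at e1
    have hrev0 : h (0 : Fin (m + 4)) = Fin.last (m + 3) := by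
      simp [hhdef]
    rw [hrev0] at e1
    have hlast : (1 : Fin (m + 4)) + Fin.last (m + 3) = 0 := by
      rw [Fin.ext_iff]
      simp only [Fin.add_def, Fin.val_one, Fin.val_last, Fin.val_zero]
      rw [show 1 + (m + 3) = m + 4 from by omega, Nat.mod_self]
    have e2 := hlast.symm.trans e1
    have := congrArg Fin.val e2
    simp [hhdef, Fin.val_rev] at this
  -- sign computations
  have sg : Perm.sign g = -1 := by
    rw [hg, show m + 4 = (m + 3) + 1 from rfl, sign_finRotate]
    exact Odd.neg_one_pow ⟨m / 2 + 1, by omega⟩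
  have sh : Perm.sign h = 1 := by
    rw [hhdef, sign_revPerm_eq]
    refine Even.neg_one_pow ?_
    obtain ⟨q, rfl⟩ : ∃ q, m = 4 * q := ⟨m / 4, by omega⟩
    exact ⟨q + 1, by omega⟩
  have hD := mem_dihedral hh hc
  have hK := mem_dihedral hh hc2
  have hne : (-1 : ℤˣ) ≠ 1 := by decide
  -- the subgroup equality
  have heq : Subgroup.closure {g, h} ⊓ alternatingGroup (Fin (m + 4))
      = Subgroup.closure {g ^ 2, h} := by
    ext x
    rw [Subgroup.mem_inf, hD x, hK x, Equiv.Perm.mem_alternatingGroup]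
    constructor
    · rintro ⟨⟨k, rfl⟩ | ⟨k, rfl⟩, hxA⟩
      · have hev : Even k := by
          by_contra hodd
          rw [Int.not_even_iff_odd] at hodd
          rw [map_zpow, sg] at hxA
          rw [neg_one_zpow_odd hodd] at hxA
          exact hne hxA
        obtain ⟨j, rfl⟩ := hev
        exact Or.inl ⟨j, by rw [key, two_mul]⟩
      · have hev : Even k := by
          by_contra hodd
          rw [Int.not_even_iff_odd] at hodd
          rw [map_mul, map_zpow, sg, sh, mul_one] at hxA
          rw [neg_one_zpow_odd hodd] at hxA
          exact hne hxA
        obtain ⟨j, rfl⟩ := hev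
        exact Or.inr ⟨j, by rw [key, two_mul]⟩
    · rintro (⟨k, rfl⟩ | ⟨k, rfl⟩)
      · refine ⟨Or.inl ⟨2 * k, by rw [key]⟩, ?_⟩
        rw [key, map_zpow, sg, neg_one_zpow_two_mul]
      · refine ⟨Or.inr ⟨2 * k, by rw [key]⟩, ?_⟩
        rw [map_mul, key, map_zpow, sg, sh, mul_one, neg_one_zpow_two_mul]
  refine ⟨heq, ?_⟩
  rw [heq]
  -- cardinality of the closure of {g², h}
  have hset : (Subgroup.closure {g ^ 2, h} : Set (Perm (Fin (m + 4))))
      = ↑(Subgroup.zpowers (g ^ 2)) ∪ (· * h) '' ↑(Subgroup.zpowers (g ^ 2)) := by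
    ext x
    rw [SetLike.mem_coe, hK x]
    constructor
    · rintro (⟨k, rfl⟩ | ⟨k, rfl⟩)
      · exact Or.inl ⟨k, rfl⟩
      · exact Or.inr ⟨(g ^ 2) ^ k, ⟨k, rfl⟩, rfl⟩
    · rintro (⟨k, rfl⟩ | ⟨u, ⟨k, rfl⟩, rfl⟩)
      · exact Or.inl ⟨k, rfl⟩
      · exact Or.inr ⟨k, rfl⟩
  have hdisj : Disjoint (↑(Subgroup.zpowers (g ^ 2)) : Set (Perm (Fin (m + 4))))
      ((· * h) '' ↑(Subgroup.zpowers (g ^ 2))) := by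
    rw [Set.disjoint_left]
    rintro x ⟨k, rfl⟩ ⟨u, ⟨j, rfl⟩, huh⟩
    apply hnotin
    have huh' : (g ^ 2) ^ j * h = (g ^ 2) ^ k := huh
    have : h = ((g ^ 2) ^ j)⁻¹ * (g ^ 2) ^ k := by
      rw [← huh']; group
    rw [this, key, key, ← zpow_neg, ← zpow_add]
    exact ⟨-(2 * j) + 2 * k, rfl⟩
  have horder : orderOf g = m + 4 := by
    rw [(isCycle_finRotate_of_le (by omega)).orderOf,
      support_finRotate_of_le (by omega), Finset.card_univ, Fintype.card_fin]
  have horder2 : orderOf (g ^ 2) = (m + 4) / 2 := by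
    rw [orderOf_pow, horder, Nat.gcd_eq_right (Nat.dvd_of_mod_eq_zero (by omega))]
  have hZcard : (↑(Subgroup.zpowers (g ^ 2)) : Set (Perm (Fin (m + 4)))).ncard
      = (m + 4) / 2 := by
    rw [← Nat.card_coe_set_eq, SetLike.coe_sort_coe, Nat.card_zpowers, horder2]
  rw [← SetLike.coe_sort_coe, Nat.card_coe_set_eq, hset,
    Set.ncard_union_eq hdisj (Set.toFinite _) (Set.toFinite _),
    Set.ncard_image_of_injective _ (mul_left_injective h), hZcard]
  omega
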